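/- Let n ≥ 1 be a natural number, δ > 0, 0 < ε < 2δ, a ≤ b real numbers, and λ₁, λ₂ ∈ [0, 1] with λ = max(λ₁, λ₂) satisfying 0 < λ < 1/2. Let S ⊆ (Fin n → ℝ) be a measurable set such that: (i) for every κ ∈ [a, b], vol(Sᶜ ∩ Box(κ)) ≤ λ₁·(2δ)^n, and (ii) for every κ with κ ≤ a − ε or κ ≥ b + ε, vol(S ∩ Box(κ)) ≤ λ₂·(2δ)^n, where vol denotes n-dimensional Lebesgue measure. Then the number of observations satisfies n ≥ log(2λ) / log(1 − ε/(2δ)). -/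

import Mathlib

/-- Kleinewächter's logarithmic lower bound on the number of observations for a
two-error root-identification test: `n ≥ log(2λ) / log(1 - ε/(2δ))`. -/
theorem two_error_test_log_bound (n : ℕ) (hn : 1 ≤ n) (δ ε : ℝ) (hδ : 0 < δ)
    (hε0 : 0 < ε) (hε : ε < 2 * δ) (a b : ℝ) (hab : a ≤ b)
    (lam₁ lam₂ : ℝ) (hlam₁ : lam₁ ∈ Set.Icc (0 : ℝ) 1) (hlam₂ : lam₂ ∈ Set.Icc (0 : ℝ) 1)
    (hlam0 : 0 < max lam₁ lam₂) (hlam : max lam₁ lam₂ < 1 / 2)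
    (S : Set (Fin n → ℝ)) (hS : MeasurableSet S)
    (hI : ∀ κ ∈ Set.Icc a b,
      MeasureTheory.volume (Sᶜ ∩ {y : Fin n → ℝ | ∀ i, y i ∈ Set.Icc (κ - δ) (κ + δ)}) ≤
        ENNReal.ofReal (lam₁ * (2 * δ) ^ n))
    (hII : ∀ κ : ℝ, (κ ≤ a - ε ∨ b + ε ≤ κ) →
      MeasureTheory.volume (S ∩ {y : Fin n → ℝ | ∀ i, y i ∈ Set.Icc (κ - δ) (κ + δ)}) ≤
        ENNReal.ofReal (lam₂ * (2 * δ) ^ n)) :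
    Real.log (2 * max lam₁ lam₂) / Real.log (1 - ε / (2 * δ)) ≤ (n : ℝ) := by
  set lam := max lam₁ lam₂ with hlamdef
  set B : Set (Fin n → ℝ) := {y | ∀ i, y i ∈ Set.Icc (a - δ) (a - ε + δ)} with hBdef
  have hBpi : B = Set.pi Set.univ (fun _ : Fin n => Set.Icc (a - δ) (a - ε + δ)) := by
    ext y
    simp only [hBdef, Set.mem_setOf_eq, Set.mem_univ_pi]
  have hvolB : MeasureTheory.volume B = ENNReal.ofReal ((2 * δ - ε) ^ n) := by
    rw [hBpi, MeasureTheory.volume_pi_pi]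
    simp [Real.volume_Icc]
    rw [← ENNReal.ofReal_pow (by linarith)]
    congr 1; ring_nf
  -- B is contained in Box(a) and in Box(a-ε)
  have hB1 : B ⊆ {y : Fin n → ℝ | ∀ i, y i ∈ Set.Icc (a - δ) (a + δ)} := by
    intro y hy i
    have := hy i
    constructor <;> [exact this.1; linarith [this.2]]
  have hB2 : B ⊆ {y : Fin n → ℝ | ∀ i, y i ∈ Set.Icc ((a - ε) - δ) ((a - ε) + δ)} := by
    intro y hy i
    have := hy i
    constructor <;> [linarith [this.1]; linarith [this.2]]
  have h1 := hI a ⟨le_refl a, hab⟩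
  have h2 := hII (a - ε) (Or.inl le_rfl)
  have hsplit : MeasureTheory.volume B ≤
      MeasureTheory.volume (S ∩ B) + MeasureTheory.volume (Sᶜ ∩ B) := by
    have : B ⊆ (S ∩ B) ∪ (Sᶜ ∩ B) := by
      intro y hy
      by_cases h : y ∈ S
      · exact Or.inl ⟨h, hy⟩
      · exact Or.inr ⟨h, hy⟩
    exact le_trans (MeasureTheory.measure_mono this) (MeasureTheory.measure_union_le _ _)
  have hchain : ENNReal.ofReal ((2 * δ - ε) ^ n) ≤
      ENNReal.ofReal (lam₂ * (2 * δ) ^ n + lam₁ * (2 * δ) ^ n) := by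
    rw [← hvolB, ENNReal.ofReal_add (mul_nonneg hlam₂.1 (le_of_lt (pow_pos (by linarith) n))) (mul_nonneg hlam₁.1 (le_of_lt (pow_pos (by linarith) n)))]
    refine hsplit.trans (add_le_add ?_ ?_)
    · exact le_trans (MeasureTheory.measure_mono (Set.inter_subset_inter_right S hB2)) h2
    · exact le_trans (MeasureTheory.measure_mono (Set.inter_subset_inter_right Sᶜ hB1)) h1
  have hpow2δ : (0:ℝ) < (2 * δ) ^ n := pow_pos (by linarith) n
  have hkey : (2 * δ - ε) ^ n ≤ 2 * lam * (2 * δ) ^ n := by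
    have hre : (2 * δ - ε) ^ n ≤ lam₂ * (2 * δ) ^ n + lam₁ * (2 * δ) ^ n := by
      have := (ENNReal.ofReal_le_ofReal_iff (by nlinarith [hlam₁.1, hlam₂.1])).mp hchain
      exact this
    have h1' : lam₁ ≤ lam := le_max_left _ _
    have h2' : lam₂ ≤ lam := le_max_right _ _
    nlinarith
  set r : ℝ := 1 - ε / (2 * δ) with hrdef
  have hr0 : 0 < r := by
    rw [hrdef]
    have : ε / (2 * δ) < 1 := (div_lt_one (by linarith)).mpr hε
    linarith
  have hr1 : r < 1 := by
    rw [hrdef]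
    have : 0 < ε / (2 * δ) := div_pos hε0 (by linarith)
    linarith
  have hrn : r ^ n ≤ 2 * lam := by
    have hr2δ : r * (2 * δ) = 2 * δ - ε := by
      rw [hrdef, sub_mul, div_mul_cancel₀ _ (ne_of_gt (by linarith : (0:ℝ) < 2 * δ))]; ring
    have : (r * (2 * δ)) ^ n ≤ 2 * lam * (2 * δ) ^ n := by rw [hr2δ]; exact hkey
    rw [mul_pow] at this
    exact le_of_mul_le_mul_right this hpow2δ
  have hlogr : Real.log r < 0 := Real.log_neg hr0 hr1
  rw [div_le_iff_of_neg hlogr]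
  have : Real.log (r ^ n) ≤ Real.log (2 * lam) :=
    Real.log_le_log (pow_pos hr0 n) hrn
  rw [Real.log_pow] at this
  linarith [this]
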